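/- Let A, B be bounded linear operators on a complex Hilbert space H, K a nonempty set of unit vectors, ber(T)=sup_{k∈K}|⟨T k,k⟩|, ‖T‖_ber=sup_{k,l∈K}|⟨T k,l⟩|. Then ‖A² + B²‖_ber² ≤ ber(A*A + B*B) · ber(A A* + B B*). -/

import Mathlib

open ContinuousLinearMap

noncomputable def berNum {H : Type*} [NormedAddCommGroup H] [InnerProductSpace ℂ H]
    (K : Set H) (T : H →L[ℂ] H) : ℝ :=
  sSup {x : ℝ | ∃ k ∈ K, x = ‖(inner ℂ (T k) k : ℂ)‖}

noncomputable def berNorm {H : Type*} [NormedAddCommGroup H] [InnerProductSpace ℂ H]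
    (K : Set H) (T : H →L[ℂ] H) : ℝ :=
  sSup {x : ℝ | ∃ k ∈ K, ∃ l ∈ K, x = ‖(inner ℂ (T k) l : ℂ)‖}

theorem berNorm_sq_add_sq {H : Type*} [NormedAddCommGroup H] [InnerProductSpace ℂ H] [CompleteSpace H]
    (A B : H →L[ℂ] H) (K : Set H) (hK : K.Nonempty) (hK1 : ∀ k ∈ K, ‖k‖ = 1) :
    (berNorm K (A ^ 2 + B ^ 2)) ^ 2
      ≤ berNum K (adjoint A * A + adjoint B * B) * berNum K (A * adjoint A + B * adjoint B) := by
  set T₁ := adjoint A * A + adjoint B * B with hT₁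
  set T₂ := A * adjoint A + B * adjoint B with hT₂
  set c₁ := berNum K T₁ with hc₁
  set c₂ := berNum K T₂ with hc₂
  -- value of the berNum sets
  have hval₁ : ∀ k, ‖(inner ℂ (T₁ k) k : ℂ)‖ = ‖A k‖ ^ 2 + ‖B k‖ ^ 2 := by
    intro k
    have : (inner ℂ (T₁ k) k : ℂ) = ((‖A k‖ ^ 2 + ‖B k‖ ^ 2 : ℝ) : ℂ) := by
      simp only [hT₁, add_apply, mul_apply_eq_comp, inner_add_left, adjoint_inner_left,
        inner_self_eq_norm_sq_to_K]
      norm_cast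
    rw [this, Complex.norm_real, Real.norm_of_nonneg (by positivity)]
  have hval₂ : ∀ l, ‖(inner ℂ (T₂ l) l : ℂ)‖ = ‖adjoint A l‖ ^ 2 + ‖adjoint B l‖ ^ 2 := by
    intro l
    have : (inner ℂ (T₂ l) l : ℂ) = ((‖adjoint A l‖ ^ 2 + ‖adjoint B l‖ ^ 2 : ℝ) : ℂ) := by
      simp only [hT₂, add_apply, mul_apply_eq_comp, inner_add_left]
      rw [← adjoint_inner_right A, ← adjoint_inner_right B]
      simp only [inner_self_eq_norm_sq_to_K]
      norm_cast
    rw [this, Complex.norm_real, Real.norm_of_nonneg (by positivity)]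
  have hbdd₁ : BddAbove {x : ℝ | ∃ k ∈ K, x = ‖(inner ℂ (T₁ k) k : ℂ)‖} := by
    refine ⟨‖T₁‖, ?_⟩
    rintro x ⟨k, hk, rfl⟩
    calc ‖(inner ℂ (T₁ k) k : ℂ)‖ ≤ ‖T₁ k‖ * ‖k‖ := norm_inner_le_norm _ _
      _ ≤ ‖T₁‖ * ‖k‖ * ‖k‖ := by gcongr; exact T₁.le_opNorm k
      _ = ‖T₁‖ := by rw [hK1 k hk]; ring
  have hbdd₂ : BddAbove {x : ℝ | ∃ k ∈ K, x = ‖(inner ℂ (T₂ k) k : ℂ)‖} := by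
    refine ⟨‖T₂‖, ?_⟩
    rintro x ⟨k, hk, rfl⟩
    calc ‖(inner ℂ (T₂ k) k : ℂ)‖ ≤ ‖T₂ k‖ * ‖k‖ := norm_inner_le_norm _ _
      _ ≤ ‖T₂‖ * ‖k‖ * ‖k‖ := by gcongr; exact T₂.le_opNorm k
      _ = ‖T₂‖ := by rw [hK1 k hk]; ring
  have hle₁ : ∀ k ∈ K, ‖A k‖ ^ 2 + ‖B k‖ ^ 2 ≤ c₁ := fun k hk => by
    rw [← hval₁ k]; exact le_csSup hbdd₁ ⟨k, hk, rfl⟩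
  have hle₂ : ∀ l ∈ K, ‖adjoint A l‖ ^ 2 + ‖adjoint B l‖ ^ 2 ≤ c₂ := fun l hl => by
    rw [← hval₂ l]; exact le_csSup hbdd₂ ⟨l, hl, rfl⟩
  obtain ⟨k₀, hk₀⟩ := hK
  have hc₁0 : 0 ≤ c₁ := le_trans (by positivity) (hle₁ k₀ hk₀)
  have hc₂0 : 0 ≤ c₂ := le_trans (by positivity) (hle₂ k₀ hk₀)
  -- pointwise estimate for the berNorm set
  have hpt : ∀ k ∈ K, ∀ l ∈ K,
      ‖(inner ℂ ((A ^ 2 + B ^ 2) k) l : ℂ)‖ ≤ Real.sqrt (c₁ * c₂) := by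
    intro k hk l hl
    have hrw : (inner ℂ ((A ^ 2 + B ^ 2) k) l : ℂ)
        = inner ℂ (A k) (adjoint A l) + inner ℂ (B k) (adjoint B l) := by
      simp only [add_apply, pow_two, mul_apply_eq_comp, inner_add_left]
      rw [adjoint_inner_right A, adjoint_inner_right B]
    have h1 : ‖(inner ℂ ((A ^ 2 + B ^ 2) k) l : ℂ)‖
        ≤ ‖A k‖ * ‖adjoint A l‖ + ‖B k‖ * ‖adjoint B l‖ := by
      rw [hrw]
      calc ‖(inner ℂ (A k) (adjoint A l) + inner ℂ (B k) (adjoint B l) : ℂ)‖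
          ≤ ‖(inner ℂ (A k) (adjoint A l) : ℂ)‖ + ‖(inner ℂ (B k) (adjoint B l) : ℂ)‖ :=
            norm_add_le _ _
        _ ≤ ‖A k‖ * ‖adjoint A l‖ + ‖B k‖ * ‖adjoint B l‖ :=
            add_le_add (norm_inner_le_norm _ _) (norm_inner_le_norm _ _)
    have h2 : ‖A k‖ * ‖adjoint A l‖ + ‖B k‖ * ‖adjoint B l‖
        ≤ Real.sqrt (‖A k‖ ^ 2 + ‖B k‖ ^ 2) * Real.sqrt (‖adjoint A l‖ ^ 2 + ‖adjoint B l‖ ^ 2) := by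
      set a := ‖A k‖; set b := ‖B k‖; set c := ‖adjoint A l‖; set d := ‖adjoint B l‖
      have ha : 0 ≤ a := norm_nonneg _
      have hb : 0 ≤ b := norm_nonneg _
      have hc : 0 ≤ c := norm_nonneg _
      have hd : 0 ≤ d := norm_nonneg _
      have hsq : (a * c + b * d) ^ 2 ≤ (a ^ 2 + b ^ 2) * (c ^ 2 + d ^ 2) := by nlinarith [sq_nonneg (a * d - b * c)]
      have := Real.sqrt_le_sqrt hsq
      rwa [Real.sqrt_sq (by positivity), Real.sqrt_mul (by positivity)] at this
    have h3 : Real.sqrt (‖A k‖ ^ 2 + ‖B k‖ ^ 2) * Real.sqrt (‖adjoint A l‖ ^ 2 + ‖adjoint B l‖ ^ 2)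
        ≤ Real.sqrt c₁ * Real.sqrt c₂ := by
      gcongr
      · exact hle₁ k hk
      · exact hle₂ l hl
    calc ‖(inner ℂ ((A ^ 2 + B ^ 2) k) l : ℂ)‖ ≤ _ := h1
      _ ≤ _ := h2
      _ ≤ Real.sqrt c₁ * Real.sqrt c₂ := h3
      _ = Real.sqrt (c₁ * c₂) := (Real.sqrt_mul hc₁0 _).symm
  have hmain : berNorm K (A ^ 2 + B ^ 2) ≤ Real.sqrt (c₁ * c₂) := by
    apply Real.sSup_le
    · rintro x ⟨k, hk, l, hl, rfl⟩
      exact hpt k hk l hl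
    · positivity
  have h0 : 0 ≤ berNorm K (A ^ 2 + B ^ 2) := by
    have hmem : ‖(inner ℂ ((A ^ 2 + B ^ 2) k₀) k₀ : ℂ)‖ ∈
        {x : ℝ | ∃ k ∈ K, ∃ l ∈ K, x = ‖(inner ℂ ((A ^ 2 + B ^ 2) k) l : ℂ)‖} :=
      ⟨k₀, hk₀, k₀, hk₀, rfl⟩
    have hbdd : BddAbove {x : ℝ | ∃ k ∈ K, ∃ l ∈ K, x = ‖(inner ℂ ((A ^ 2 + B ^ 2) k) l : ℂ)‖} := by
      refine ⟨Real.sqrt (c₁ * c₂), ?_⟩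
      rintro x ⟨k, hk, l, hl, rfl⟩
      exact hpt k hk l hl
    exact le_trans (norm_nonneg _) (le_csSup hbdd hmem)
  calc (berNorm K (A ^ 2 + B ^ 2)) ^ 2 ≤ Real.sqrt (c₁ * c₂) ^ 2 := by
        exact pow_le_pow_left₀ h0 hmain 2
    _ = c₁ * c₂ := Real.sq_sqrt (by positivity)
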